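/- For every d, t ∈ ℕ with t ≤ d and every ξ ∈ 𝕋^d one has |s_t(ξ) − 1| ≤ 2 · (t/d) · Σ_{j=1}^d sin²(π ξ_j). -/

import Mathlib

open Finset

noncomputable section

/-- `S_t = {x ∈ {-1,0,1}^d : Σ |x_i| = t}`. -/
def sphereS (d t : ℕ) : Finset (Fin d → ℤ) :=
  (Finset.Icc (fun _ => (-1 : ℤ)) (fun _ => (1 : ℤ))).filter fun y => ∑ i, |y i| = (t : ℤ)

/-- `s_t(ξ) = |S_t|⁻¹ Σ_{x ∈ S_t} e(x·ξ)`, where `e(y) = e^{2πiy}`. -/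
def sMul (d t : ℕ) (ξ : Fin d → ℝ) : ℂ :=
  ((sphereS d t).card : ℂ)⁻¹ *
    ∑ x ∈ sphereS d t, Complex.exp (2 * (Real.pi : ℂ) * Complex.I * ∑ k, (x k : ℂ) * (ξ k : ℂ))

lemma mem_sphereS {d t : ℕ} {x : Fin d → ℤ} :
    x ∈ sphereS d t ↔ (∀ k, -1 ≤ x k ∧ x k ≤ 1) ∧ ∑ i, |x i| = (t:ℤ) := by
  simp [sphereS, Finset.mem_filter, Finset.mem_Icc, Pi.le_def, forall_and]

lemma supp_mem {d t : ℕ} {x : Fin d → ℤ} (hx : x ∈ sphereS d t) :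
    (univ.filter fun k => x k ≠ 0) ∈ powersetCard t (univ : Finset (Fin d)) := by
  rw [mem_powersetCard]
  refine ⟨subset_univ _, ?_⟩
  obtain ⟨hb, hs⟩ := mem_sphereS.1 hx
  have h1 : ∀ i : Fin d, |x i| = if x i ≠ 0 then (1:ℤ) else 0 := by
    intro i
    obtain ⟨h1, h2⟩ := hb i
    interval_cases (x i) <;> simp
  rw [Finset.sum_congr rfl (fun i _ => h1 i), Finset.sum_boole] at hs
  exact_mod_cast hs

lemma fiber_eq {d t : ℕ} {A : Finset (Fin d)} (hA : A.card = t) :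
    ((sphereS d t).filter fun x => (univ.filter fun k => x k ≠ 0) = A) =
      Fintype.piFinset (fun k => if k ∈ A then ({-1,1} : Finset ℤ) else {0}) := by
  ext x
  simp only [Finset.mem_filter, Fintype.mem_piFinset, mem_sphereS]
  constructor
  · rintro ⟨⟨hb, -⟩, hsupp⟩ k
    by_cases hk : k ∈ A
    · have hne : x k ≠ 0 := by
        rw [← hsupp] at hk
        exact (Finset.mem_filter.1 hk).2
      obtain ⟨h1, h2⟩ := hb k
      simp only [hk, if_true, Finset.mem_insert, Finset.mem_singleton]
      omega
    · have : x k = 0 := by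
        by_contra hne
        rw [← hsupp] at hk
        exact hk (Finset.mem_filter.2 ⟨Finset.mem_univ _, hne⟩)
      simp [hk, this]
  · intro h
    have hval : ∀ k, (k ∈ A ∧ (x k = -1 ∨ x k = 1)) ∨ (k ∉ A ∧ x k = 0) := by
      intro k
      have := h k
      by_cases hk : k ∈ A <;> simp [hk] at this <;> tauto
    refine ⟨⟨fun k => by rcases hval k with ⟨-, h|h⟩ | ⟨-, h⟩ <;> omega, ?_⟩, ?_⟩
    · have h1 : ∀ i : Fin d, |x i| = if i ∈ A then (1:ℤ) else 0 := by
        intro i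
        rcases hval i with ⟨hi, h|h⟩ | ⟨hi, h⟩ <;> simp [hi, h]
      rw [Finset.sum_congr rfl (fun i _ => h1 i), Finset.sum_ite_mem]
      simp [hA]
    · ext k
      simp only [Finset.mem_filter, Finset.mem_univ, true_and]
      rcases hval k with ⟨hi, h|h⟩ | ⟨hi, h⟩ <;> simp [hi, h]

lemma sum_sphere {β : Type*} [CommSemiring β] (d t : ℕ) (g : Fin d → ℤ → β)
    (hg : ∀ k, g k 0 = 1) :
    ∑ x ∈ sphereS d t, ∏ k, g k (x k) =
      ∑ A ∈ powersetCard t (univ : Finset (Fin d)), ∏ k ∈ A, (g k 1 + g k (-1)) := by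
  rw [← Finset.sum_fiberwise_of_maps_to (fun x hx => supp_mem hx) (fun x => ∏ k, g k (x k))]
  refine Finset.sum_congr rfl fun A hA => ?_
  have hAcard := (mem_powersetCard.1 hA).2
  rw [fiber_eq hAcard, ← Finset.prod_univ_sum]
  have h1 : ∀ k, ∑ v ∈ (if k ∈ A then ({-1,1} : Finset ℤ) else {0}), g k v =
      if k ∈ A then g k 1 + g k (-1) else 1 := by
    intro k; by_cases hk : k ∈ A <;> simp [hk, hg, add_comm]
  rw [Finset.prod_congr rfl (fun k _ => h1 k), Finset.prod_ite_mem, univ_inter]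

lemma card_sphereS (d t : ℕ) : (sphereS d t).card = d.choose t * 2 ^ t := by
  have h := sum_sphere (β := ℕ) d t (fun _ _ => 1) (fun _ => rfl)
  simp only [Finset.prod_const, Finset.card_univ, one_pow] at h
  rw [Finset.card_eq_sum_ones, h,
    Finset.sum_congr rfl (fun A hA => by rw [(mem_powersetCard.1 hA).2]),
    Finset.sum_const, Finset.card_powersetCard, card_univ, Fintype.card_fin, smul_eq_mul]

set_option maxHeartbeats 1000000 in
lemma sMul_eq (d t : ℕ) (ht : t ≤ d) (ξ : Fin d → ℝ) :
    sMul d t ξ = (((d.choose t : ℝ))⁻¹ *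
      ∑ A ∈ powersetCard t (univ : Finset (Fin d)), ∏ k ∈ A, Real.cos (2 * Real.pi * ξ k) : ℝ) := by
  unfold sMul
  have hexp : ∀ x : Fin d → ℤ,
      Complex.exp (2 * (Real.pi : ℂ) * Complex.I * ∑ k, (x k : ℂ) * (ξ k : ℂ)) =
        ∏ k, Complex.exp (((2 * (Real.pi : ℝ) * ξ k : ℝ) : ℂ) * (x k : ℂ) * Complex.I) := by
    intro x
    rw [← Complex.exp_sum]
    congr 1
    rw [Finset.mul_sum]
    refine Finset.sum_congr rfl fun k _ => ?_
    push_cast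
    ring
  rw [Finset.sum_congr rfl fun x _ => hexp x,
    sum_sphere d t (fun k v => Complex.exp (((2 * (Real.pi : ℝ) * ξ k : ℝ) : ℂ) * (v : ℂ) * Complex.I))
      (fun k => by simp)]
  have hcos : ∀ k : Fin d,
      Complex.exp (((2 * (Real.pi : ℝ) * ξ k : ℝ) : ℂ) * ((1:ℤ) : ℂ) * Complex.I) +
        Complex.exp (((2 * (Real.pi : ℝ) * ξ k : ℝ) : ℂ) * ((-1:ℤ) : ℂ) * Complex.I) =
      2 * Complex.cos ((2 * Real.pi * ξ k : ℝ) : ℂ) := by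
    intro k
    rw [Complex.two_cos]
    push_cast
    ring_nf
  rw [Finset.sum_congr rfl fun A hA => Finset.prod_congr rfl fun k _ => hcos k]
  have h2 : ∀ A ∈ powersetCard t (univ : Finset (Fin d)),
      (∏ k ∈ A, (2 * Complex.cos ((2 * Real.pi * ξ k : ℝ) : ℂ))) =
        2 ^ t * ∏ k ∈ A, Complex.cos ((2 * Real.pi * ξ k : ℝ) : ℂ) := by
    intro A hA
    rw [Finset.prod_mul_distrib, Finset.prod_const, (mem_powersetCard.1 hA).2]
  rw [Finset.sum_congr rfl h2, ← Finset.mul_sum, card_sphereS]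
  have hc : ((d.choose t : ℂ)) ≠ 0 := Nat.cast_ne_zero.2 (Nat.choose_pos ht).ne'
  have h2t : ((2:ℂ)^t) ≠ 0 := pow_ne_zero t two_ne_zero
  push_cast [Complex.ofReal_cos]
  field_simp

lemma one_sub_prod_le {ι : Type*} (s : Finset ι) (c : ι → ℝ) (h : ∀ k ∈ s, |c k| ≤ 1) :
    1 - ∏ k ∈ s, c k ≤ ∑ k ∈ s, (1 - c k) := by
  induction s using Finset.cons_induction with
  | empty => simp
  | cons a s ha ih =>
    rw [Finset.prod_cons, Finset.sum_cons]
    have hP : |∏ k ∈ s, c k| ≤ 1 := by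
      rw [Finset.abs_prod]
      exact Finset.prod_le_one (fun k _ => abs_nonneg _)
        (fun k hk => h k (Finset.mem_cons_of_mem hk))
    have h1 := ih (fun k hk => h k (Finset.mem_cons_of_mem hk))
    have ha1 : |c a| ≤ 1 := h a (Finset.mem_cons_self a s)
    have key : 0 ≤ (1 - c a) * (1 - ∏ k ∈ s, c k) :=
      mul_nonneg (by linarith [(abs_le.1 ha1).2]) (by linarith [(abs_le.1 hP).2])
    nlinarith [key, h1]

lemma count_mem {d t : ℕ} (ht0 : 1 ≤ t) (k : Fin d) :
    ((powersetCard t (univ : Finset (Fin d))).filter fun A => k ∈ A).card =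
      (d - 1).choose (t - 1) := by
  have hbij : ((powersetCard t (univ : Finset (Fin d))).filter fun A => k ∈ A).card
      = (powersetCard (t - 1) ((univ : Finset (Fin d)).erase k)).card := by
    apply Finset.card_bij (fun A _ => A.erase k)
    · intro A hA
      simp only [Finset.mem_filter, mem_powersetCard] at hA
      rw [mem_powersetCard]
      exact ⟨Finset.erase_subset_erase k hA.1.1,
        by rw [Finset.card_erase_of_mem hA.2, hA.1.2]⟩
    · intro A hA B hB hAB
      simp only [Finset.mem_filter] at hA hB
      rw [← Finset.insert_erase hA.2, hAB, Finset.insert_erase hB.2]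
    · intro B hB
      rw [mem_powersetCard] at hB
      have hkB : k ∉ B := fun hk => (Finset.mem_erase.1 (hB.1 hk)).1 rfl
      refine ⟨insert k B, ?_, ?_⟩
      · simp only [Finset.mem_filter, mem_powersetCard]
        refine ⟨⟨Finset.subset_univ _, ?_⟩, Finset.mem_insert_self _ _⟩
        rw [Finset.card_insert_of_notMem hkB, hB.2]
        omega
      · rw [Finset.erase_insert hkB]
  rw [hbij, Finset.card_powersetCard, Finset.card_erase_of_mem (Finset.mem_univ k),
    Finset.card_univ, Fintype.card_fin]

/-- Lemma 3.1: for `t ≤ d` and every `ξ ∈ 𝕋^d`,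
`|s_t(ξ) - 1| ≤ 2 (t/d) Σ_j sin²(π ξ_j)`. -/
theorem sMul_sub_one_bound (d t : ℕ) (ht0 : 1 ≤ t) (ht : t ≤ d) (ξ : Fin d → ℝ) :
    ‖sMul d t ξ - 1‖ ≤
      2 * ((t : ℝ) / d) * ∑ j, Real.sin (Real.pi * ξ j) ^ 2 := by
  rw [sMul_eq d t ht ξ]
  set P := powersetCard t (univ : Finset (Fin d)) with hP
  set C : ℝ := (d.choose t : ℝ) with hCdef
  set c : Fin d → ℝ := fun k => Real.cos (2 * Real.pi * ξ k) with hc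
  set S : ℝ := ∑ A ∈ P, ∏ k ∈ A, c k with hSdef
  have hC : 0 < C := by rw [hCdef]; exact_mod_cast Nat.choose_pos ht
  have habs : ‖(↑(C⁻¹ * S) : ℂ) - 1‖ = |C⁻¹ * S - 1| := by
    rw [show ((↑(C⁻¹ * S) : ℂ) - 1) = ((C⁻¹ * S - 1 : ℝ) : ℂ) by push_cast; ring,
      Complex.norm_real, Real.norm_eq_abs]
  rw [habs]
  have hprod_le : ∀ A ∈ P, |∏ k ∈ A, c k| ≤ 1 := fun A _ => by
    rw [Finset.abs_prod]
    exact Finset.prod_le_one (fun _ _ => abs_nonneg _) (fun k _ => Real.abs_cos_le_one _)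
  have hcard : P.card = d.choose t := by
    rw [hP, Finset.card_powersetCard, card_univ, Fintype.card_fin]
  have hS_le : S ≤ C := by
    calc S ≤ ∑ A ∈ P, 1 := Finset.sum_le_sum fun A hA => by
            linarith [(abs_le.1 (hprod_le A hA)).2]
      _ = C := by rw [Finset.sum_const, hcard, nsmul_eq_mul, mul_one]
  have h1 : |C⁻¹ * S - 1| = C⁻¹ * (C - S) := by
    rw [abs_of_nonpos]
    · field_simp; ring
    · have : C⁻¹ * S ≤ C⁻¹ * C := mul_le_mul_of_nonneg_left hS_le (inv_nonneg.2 hC.le)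
      rw [inv_mul_cancel₀ hC.ne'] at this
      linarith
  rw [h1]
  have h2 : C - S = ∑ A ∈ P, (1 - ∏ k ∈ A, c k) := by
    rw [Finset.sum_sub_distrib, Finset.sum_const, hcard, nsmul_eq_mul, mul_one, hSdef]
  have h3 : ∑ A ∈ P, (1 - ∏ k ∈ A, c k) ≤ ∑ A ∈ P, ∑ k ∈ A, (1 - c k) :=
    Finset.sum_le_sum fun A _ => one_sub_prod_le A c (fun k _ => Real.abs_cos_le_one _)
  set m : ℕ := (d - 1).choose (t - 1) with hm
  have h4 : ∑ A ∈ P, ∑ k ∈ A, (1 - c k) = ∑ k, (1 - c k) * m := by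
    have hA : ∀ A : Finset (Fin d), ∑ k ∈ A, (1 - c k) =
        ∑ k : Fin d, if k ∈ A then (1 - c k) else 0 := fun A => by
      rw [Finset.sum_ite_mem, univ_inter]
    rw [Finset.sum_congr rfl (fun A _ => hA A), Finset.sum_comm]
    refine Finset.sum_congr rfl fun k _ => ?_
    rw [← Finset.sum_filter, Finset.sum_const, hP, count_mem ht0 k, nsmul_eq_mul, mul_comm]
  have h5 : ∀ k : Fin d, 1 - c k = 2 * Real.sin (Real.pi * ξ k) ^ 2 := by
    intro k
    have hpy := Real.sin_sq_add_cos_sq (Real.pi * ξ k)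
    rw [hc]
    simp only
    rw [show 2 * Real.pi * ξ k = 2 * (Real.pi * ξ k) by ring, Real.cos_two_mul']
    linarith
  have hmd : (d : ℝ) * (m : ℝ) = (t : ℝ) * C := by
    have hnat : d * m = t * d.choose t := by
      have := Nat.add_one_mul_choose_eq (d - 1) (t - 1)
      have hd1 : d - 1 + 1 = d := by omega
      have ht1 : t - 1 + 1 = t := by omega
      rw [hd1, ht1] at this
      rw [hm, this]; ring
    rw [hCdef]
    exact_mod_cast hnat
  have h6 : C⁻¹ * (∑ k, (1 - c k) * m) = 2 * ((t : ℝ) / d) * ∑ j, Real.sin (Real.pi * ξ j) ^ 2 := by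
    rw [Finset.sum_congr rfl (fun k _ => by rw [h5 k]), ← Finset.sum_mul, ← Finset.mul_sum]
    have hd : (0 : ℝ) < d := by exact_mod_cast Nat.lt_of_lt_of_le (by omega) ht
    field_simp
    linear_combination (∑ j, Real.sin (Real.pi * ξ j) ^ 2) * hmd
  calc C⁻¹ * (C - S) ≤ C⁻¹ * (∑ k, (1 - c k) * m) := by
        apply mul_le_mul_of_nonneg_left _ (inv_nonneg.2 hC.le)
        rw [h2]; exact h3.trans (le_of_eq h4)
    _ = _ := h6
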